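/- The pair (A, B), where A = W_Box(T,>0) ∩ Γ and B = W_Box(T_ε,>0) ∩ Γ in a stochastic BPA game with simple target set T, is the least fixed point of the monotone operator F on 2^Γ × 2^Γ given by F(A,B) = (Â,B̂) with Â = Γ_T ∪ A ∪ {X ∈ Γ_Box ∪ Γ_Circle : ∃ rule X→β with β ∈ B*AΓ*} ∪ {X ∈ Γ_Diamond : ∀ rules X→β, β ∈ B*AΓ*}, and B̂ = Γ_T ∪ B ∪ {X ∈ Γ_Box ∪ Γ_Circle : ∃ rule X→β with β ∈ B*AΓ* ∪ B*} ∪ {X ∈ Γ_Diamond : ∀ rules X→β, β ∈ B*AΓ* ∪ B*}. -/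

import Mathlib

open scoped Classical

/-- A stochastic BPA game: finite stack alphabet `Γ`, rules `X → α` with
`|α| ≤ 2`, symbols partitioned among player Box, player Diamond, and
probabilistic symbols, the latter carrying positive rational distributions
over their rules. -/
structure BPA (Γ : Type*) [Fintype Γ] where
  rule : Γ → List Γ → Prop
  rule_len : ∀ X α, rule X α → α.length ≤ 2
  rule_total : ∀ X, ∃ α, rule X α
  isBox : Γ → Prop
  isDiamond : Γ → Prop
  isCirc : Γ → Prop
  cover : ∀ X, isBox X ∨ isDiamond X ∨ isCirc X
  disjBD : ∀ X, ¬ (isBox X ∧ isDiamond X)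
  disjBC : ∀ X, ¬ (isBox X ∧ isCirc X)
  disjDC : ∀ X, ¬ (isDiamond X ∧ isCirc X)
  prob : Γ → List Γ → ℝ
  prob_nonneg : ∀ X α, 0 ≤ prob X α
  prob_rat : ∀ X α, ∃ q : ℚ, prob X α = (q : ℝ)
  prob_supp : ∀ X α, isCirc X → (0 < prob X α ↔ rule X α)
  prob_sum : ∀ X, isCirc X → ∑' α, prob X α = 1

variable {Γ : Type*} [Fintype Γ]

/-- A history-dependent randomized strategy for the player owning the symbols
satisfying `own` in the stochastic game induced by a BPA game: to every history
(sequence of configurations) and current configuration `X :: β` with `own X`,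
it assigns a probability distribution on the applicable rules. -/
structure BPA.Strat (Δ : BPA Γ) (own : Γ → Prop) where
  f : List (List Γ) → List Γ → List Γ → ℝ
  nonneg : ∀ w c α, 0 ≤ f w c α
  supp : ∀ w X β α, own X → f w (X :: β) α ≠ 0 → Δ.rule X α
  sum_one : ∀ w X β, own X → ∑' α, f w (X :: β) α = 1

/-- The distribution on rules chosen at configuration `c` after history `w`. -/
noncomputable def BPA.choice (Δ : BPA Γ) (σ : Δ.Strat Δ.isBox)
    (π : Δ.Strat Δ.isDiamond) (w : List (List Γ)) (c : List Γ) (α : List Γ) : ℝ :=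
  match c with
  | [] => 0
  | X :: _ => if Δ.isBox X then σ.f w c α else if Δ.isDiamond X then π.f w c α
      else Δ.prob X α

/-- One-step transition probability between configurations in the play
induced by a BPA game (the empty configuration `ε` loops with probability 1,
and `X :: β` moves to `α ++ β` for a rule `X → α`). -/
noncomputable def BPA.stepP (Δ : BPA Γ) (σ : Δ.Strat Δ.isBox)
    (π : Δ.Strat Δ.isDiamond) (w : List (List Γ)) (c c' : List Γ) : ℝ :=
  match c with
  | [] => if c' = [] then 1 else 0
  | X :: β => ∑' α : List Γ,
      if α ++ β = c' ∧ Δ.rule X α then Δ.choice σ π w (X :: β) α else 0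

/-- Probability of reaching `T` from configuration `c` within at most `n`
transitions, after history `w`. -/
noncomputable def BPA.reachN (Δ : BPA Γ) (σ : Δ.Strat Δ.isBox)
    (π : Δ.Strat Δ.isDiamond) (T : Set (List Γ)) :
    ℕ → List (List Γ) → List Γ → ℝ
  | 0, _, c => if c ∈ T then 1 else 0
  | n+1, w, c => if c ∈ T then 1 else
      ∑' c', Δ.stepP σ π w c c' * BPA.reachN Δ σ π T n (w ++ [c]) c'

/-- Probability `P_c^{σ,π}(Reach(T))` of reaching `T` from configuration `c`. -/
noncomputable def BPA.reachP (Δ : BPA Γ) (σ : Δ.Strat Δ.isBox)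
    (π : Δ.Strat Δ.isDiamond) (T : Set (List Γ)) (c : List Γ) : ℝ :=
  ⨆ n, Δ.reachN σ π T n [] c

/-- The winning region `W_Box(T, >0)`. -/
def BPA.WBoxPos (Δ : BPA Γ) (T : Set (List Γ)) : Set (List Γ) :=
  {c | ∃ σ : Δ.Strat Δ.isBox, ∀ π : Δ.Strat Δ.isDiamond, 0 < Δ.reachP σ π T c}

/-- The winning region `W_Box(T, =1)`. -/
def BPA.WBoxOne (Δ : BPA Γ) (T : Set (List Γ)) : Set (List Γ) :=
  {c | ∃ σ : Δ.Strat Δ.isBox, ∀ π : Δ.Strat Δ.isDiamond, Δ.reachP σ π T c = 1}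

/-- The winning region `W_Diamond(T, =0)`. -/
def BPA.WDiaZero (Δ : BPA Γ) (T : Set (List Γ)) : Set (List Γ) :=
  {c | ∃ π : Δ.Strat Δ.isDiamond, ∀ σ : Δ.Strat Δ.isBox, Δ.reachP σ π T c = 0}

/-- The winning region `W_Diamond(T, <1)`. -/
def BPA.WDiaLtOne (Δ : BPA Γ) (T : Set (List Γ)) : Set (List Γ) :=
  {c | ∃ π : Δ.Strat Δ.isDiamond, ∀ σ : Δ.Strat Δ.isBox, Δ.reachP σ π T c < 1}

/-- The language `{[X] : X ∈ S}` of one-letter words over a set of symbols. -/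
def symLang (S : Set Γ) : Language Γ := {c | ∃ X ∈ S, c = [X]}

/-- The simple set of target configurations `S·Γ*` determined by the set of
symbols `S`: membership depends only on the top stack symbol, and `ε ∉ S·Γ*`. -/
def topLang (S : Set Γ) : Language Γ := {c | ∃ X β, c = X :: β ∧ X ∈ S}


/-- The operator `F` from Proposition 5.2: `F(A,B) = (Â, B̂)`. -/
def Fop (Δ : BPA Γ) (ΓT : Set Γ) (p : Set Γ × Set Γ) : Set Γ × Set Γ :=
  (ΓT ∪ p.1 ∪
      {X | (Δ.isBox X ∨ Δ.isCirc X) ∧ ∃ β, Δ.rule X β ∧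
        β ∈ KStar.kstar (symLang p.2) * symLang p.1 * (⊤ : Language Γ)} ∪
      {X | Δ.isDiamond X ∧ ∀ β, Δ.rule X β →
        β ∈ KStar.kstar (symLang p.2) * symLang p.1 * (⊤ : Language Γ)},
   ΓT ∪ p.2 ∪
      {X | (Δ.isBox X ∨ Δ.isCirc X) ∧ ∃ β, Δ.rule X β ∧
        β ∈ KStar.kstar (symLang p.2) * symLang p.1 * (⊤ : Language Γ)
              + KStar.kstar (symLang p.2)} ∪
      {X | Δ.isDiamond X ∧ ∀ β, Δ.rule X β →
        β ∈ KStar.kstar (symLang p.2) * symLang p.1 * (⊤ : Language Γ)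
              + KStar.kstar (symLang p.2)})

section Attractor

variable {Γ : Type*} [Fintype Γ]

/-- One step of the alternating (positive-probability) reachability operator
on configurations. -/
def attrStep (Δ : BPA Γ) (T : Set (List Γ)) (S : Set (List Γ)) : Set (List Γ) :=
  T ∪ {c | ∃ X β, c = X :: β ∧
    (((Δ.isBox X ∨ Δ.isCirc X) ∧ ∃ α, Δ.rule X α ∧ α ++ β ∈ S) ∨
     (Δ.isDiamond X ∧ ∀ α, Δ.rule X α → α ++ β ∈ S))}

/-- Iterates of the attractor operator. -/
def attrN (Δ : BPA Γ) (T : Set (List Γ)) : ℕ → Set (List Γ)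
  | 0 => ∅
  | n + 1 => attrStep Δ T (attrN Δ T n)

/-- The attractor: the set of configurations from which Box can force reaching
`T` with positive probability. -/
def attr (Δ : BPA Γ) (T : Set (List Γ)) : Set (List Γ) := ⋃ n, attrN Δ T n

lemma attrStep_mono {Δ : BPA Γ} {T T' S S' : Set (List Γ)} (hT : T ⊆ T')
    (hS : S ⊆ S') : attrStep Δ T S ⊆ attrStep Δ T' S' := by
  rintro c (hc | ⟨X, β, rfl, h⟩)
  · exact Or.inl (hT hc)
  · refine Or.inr ⟨X, β, rfl, ?_⟩
    rcases h with ⟨hbc, α, hr, hm⟩ | ⟨hd, hall⟩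
    · exact Or.inl ⟨hbc, α, hr, hS hm⟩
    · exact Or.inr ⟨hd, fun α hr => hS (hall α hr)⟩

lemma attrN_succ_mono (Δ : BPA Γ) (T : Set (List Γ)) :
    ∀ n, attrN Δ T n ⊆ attrN Δ T (n + 1) := by
  intro n
  induction n with
  | zero => simp [attrN]
  | succ n ih => exact attrStep_mono (subset_refl T) ih

lemma attrN_mono (Δ : BPA Γ) (T : Set (List Γ)) {m n : ℕ} (h : m ≤ n) :
    attrN Δ T m ⊆ attrN Δ T n := by
  induction h with
  | refl => exact subset_refl _
  | step _ ih => exact ih.trans (attrN_succ_mono Δ T _)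

lemma attrN_mono_T {Δ : BPA Γ} {T T' : Set (List Γ)} (hT : T ⊆ T') (n : ℕ) :
    attrN Δ T n ⊆ attrN Δ T' n := by
  induction n with
  | zero => exact subset_refl _
  | succ n ih => exact attrStep_mono hT ih

lemma attrN_subset_attr (Δ : BPA Γ) (T : Set (List Γ)) (n : ℕ) :
    attrN Δ T n ⊆ attr Δ T := Set.subset_iUnion (attrN Δ T) n

lemma target_subset_attr (Δ : BPA Γ) (T : Set (List Γ)) : T ⊆ attr Δ T :=
  fun c hc => attrN_subset_attr Δ T 1 (Or.inl hc)

lemma attr_mono_T {Δ : BPA Γ} {T T' : Set (List Γ)} (hT : T ⊆ T') :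
    attr Δ T ⊆ attr Δ T' := by
  intro c hc
  rcases Set.mem_iUnion.mp hc with ⟨n, hn⟩
  exact attrN_subset_attr Δ T' n (attrN_mono_T hT n hn)

lemma rule_finite (Δ : BPA Γ) (X : Γ) : {α | Δ.rule X α}.Finite :=
  (List.finite_length_le Γ 2).subset (fun α h => Δ.rule_len X α h)

lemma exists_uniform_bound {P : List Γ → ℕ → Prop}
    (hmono : ∀ α m n, m ≤ n → P α m → P α n)
    (s : Finset (List Γ)) (h : ∀ α ∈ s, ∃ n, P α n) :
    ∃ N, ∀ α ∈ s, P α N := by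
  classical
  induction s using Finset.induction with
  | empty => exact ⟨0, by simp⟩
  | @insert a s ha ih =>
    obtain ⟨N₁, hN₁⟩ := ih (fun α hα => h α (Finset.mem_insert_of_mem hα))
    obtain ⟨N₂, hN₂⟩ := h a (Finset.mem_insert_self a s)
    refine ⟨max N₁ N₂, ?_⟩
    intro α hα
    rcases Finset.mem_insert.mp hα with rfl | hα
    · exact hmono _ _ _ (le_max_right _ _) hN₂
    · exact hmono _ _ _ (le_max_left _ _) (hN₁ α hα)

lemma attr_prefixed (Δ : BPA Γ) (T : Set (List Γ)) :
    attrStep Δ T (attr Δ T) ⊆ attr Δ T := by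
  rintro c (hc | ⟨X, β, rfl, h⟩)
  · exact target_subset_attr Δ T hc
  rcases h with ⟨hbc, α, hr, hm⟩ | ⟨hd, hall⟩
  · rcases Set.mem_iUnion.mp hm with ⟨n, hn⟩
    exact attrN_subset_attr Δ T (n + 1) (Or.inr ⟨X, β, rfl, Or.inl ⟨hbc, α, hr, hn⟩⟩)
  · classical
    have hfin := rule_finite Δ X
    have h1 : ∀ α ∈ hfin.toFinset, ∃ n, α ++ β ∈ attrN Δ T n := by
      intro α hα
      exact Set.mem_iUnion.mp (hall α (hfin.mem_toFinset.mp hα))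
    obtain ⟨N, hN⟩ := exists_uniform_bound
      (P := fun α n => α ++ β ∈ attrN Δ T n)
      (fun α m n hmn hm => attrN_mono Δ T hmn hm) hfin.toFinset h1
    refine attrN_subset_attr Δ T (N + 1) (Or.inr ⟨X, β, rfl, Or.inr ⟨hd, ?_⟩⟩)
    intro α hr
    exact hN α (hfin.mem_toFinset.mpr hr)

lemma not_mem_attr_elim {Δ : BPA Γ} {T : Set (List Γ)} {c : List Γ}
    (hc : c ∉ attr Δ T) : c ∉ attrStep Δ T (attr Δ T) :=
  fun h => hc (attr_prefixed Δ T h)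

lemma nil_not_mem_attrN {Δ : BPA Γ} {T : Set (List Γ)} (hε : ([] : List Γ) ∉ T) :
    ∀ n, ([] : List Γ) ∉ attrN Δ T n := by
  intro n
  cases n with
  | zero => simp [attrN]
  | succ n =>
    rintro (h | ⟨X, β, h, _⟩)
    · exact hε h
    · exact nomatch h

end Attractor
section Analysis

variable {Γ : Type*} [Fintype Γ]

lemma summable_of_tsum_ne_zero {ι : Type*} {f : ι → ℝ} (h : ∑' i, f i ≠ 0) :
    Summable f := by
  by_contra hc
  exact h (tsum_eq_zero_of_not_summable hc)

lemma exists_ne_zero_of_tsum_ne_zero {ι : Type*} {f : ι → ℝ}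
    (h : ∑' i, f i ≠ 0) : ∃ i, f i ≠ 0 := by
  by_contra hc
  push_neg at hc
  exact h (by simp [funext hc])

namespace BPA

variable {Δ : BPA Γ} (σ : Δ.Strat Δ.isBox) (π : Δ.Strat Δ.isDiamond)
  (w : List (List Γ))

lemma choice_nonneg (c α : List Γ) : 0 ≤ Δ.choice σ π w c α := by
  cases c with
  | nil => exact le_refl 0
  | cons X β =>
    show (0:ℝ) ≤ if Δ.isBox X then _ else if Δ.isDiamond X then _ else _
    split
    · exact σ.nonneg _ _ _
    split
    · exact π.nonneg _ _ _
    · exact Δ.prob_nonneg _ _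

lemma tsum_choice (X : Γ) (β : List Γ) :
    ∑' α, Δ.choice σ π w (X :: β) α = 1 := by
  show ∑' α, (if Δ.isBox X then σ.f w (X :: β) α
      else if Δ.isDiamond X then π.f w (X :: β) α else Δ.prob X α) = 1
  by_cases hB : Δ.isBox X
  · simp only [if_pos hB]
    exact σ.sum_one w X β hB
  by_cases hD : Δ.isDiamond X
  · simp only [if_neg hB, if_pos hD]
    exact π.sum_one w X β hD
  · have hC : Δ.isCirc X := by
      rcases Δ.cover X with h | h | h
      · exact absurd h hB
      · exact absurd h hD
      · exact h
    simp only [if_neg hB, if_neg hD]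
    exact Δ.prob_sum X hC

lemma summable_choice (X : Γ) (β : List Γ) :
    Summable (Δ.choice σ π w (X :: β)) :=
  summable_of_tsum_ne_zero (by rw [tsum_choice]; norm_num)

lemma stepP_nil (c' : List Γ) :
    Δ.stepP σ π w [] c' = if c' = [] then 1 else 0 := rfl

lemma stepP_cons (X : Γ) (β c' : List Γ) :
    Δ.stepP σ π w (X :: β) c' = ∑' α : List Γ,
      if α ++ β = c' ∧ Δ.rule X α then Δ.choice σ π w (X :: β) α else 0 := rfl

lemma stepP_apply (X : Γ) (α β : List Γ) :
    Δ.stepP σ π w (X :: β) (α ++ β) =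
      if Δ.rule X α then Δ.choice σ π w (X :: β) α else 0 := by
  rw [stepP_cons, tsum_eq_single α]
  · simp
  · intro α' hne
    rw [if_neg]
    rintro ⟨he, -⟩
    exact hne (List.append_cancel_right he)

lemma stepP_apply_rule {X : Γ} {α : List Γ} (β : List Γ) (hr : Δ.rule X α) :
    Δ.stepP σ π w (X :: β) (α ++ β) = Δ.choice σ π w (X :: β) α := by
  rw [stepP_apply, if_pos hr]

lemma stepP_out (X : Γ) (β : List Γ) {c' : List Γ}
    (h : c' ∉ Set.range (fun l : List Γ => l ++ β)) :
    Δ.stepP σ π w (X :: β) c' = 0 := by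
  rw [stepP_cons]
  convert tsum_zero with α
  rw [if_neg]
  rintro ⟨he, -⟩
  exact h ⟨α, he⟩

lemma stepP_ne_zero {X : Γ} {β c' : List Γ}
    (h : Δ.stepP σ π w (X :: β) c' ≠ 0) :
    ∃ α, α ++ β = c' ∧ Δ.rule X α ∧ Δ.choice σ π w (X :: β) α ≠ 0 := by
  rw [stepP_cons] at h
  obtain ⟨α, hα⟩ := exists_ne_zero_of_tsum_ne_zero h
  by_cases hc : α ++ β = c' ∧ Δ.rule X α
  · exact ⟨α, hc.1, hc.2, by rwa [if_pos hc] at hα⟩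
  · exact absurd (if_neg hc) hα

lemma stepP_nonneg (c c' : List Γ) : 0 ≤ Δ.stepP σ π w c c' := by
  cases c with
  | nil => rw [stepP_nil]; split <;> norm_num
  | cons X β =>
    rw [stepP_cons]
    refine tsum_nonneg fun α => ?_
    split
    · exact choice_nonneg σ π w _ _
    · exact le_refl 0

lemma summable_stepP (c : List Γ) : Summable (Δ.stepP σ π w c) := by
  cases c with
  | nil =>
    refine summable_of_ne_finset_zero (s := {([] : List Γ)}) fun c' hc' => ?_
    rw [stepP_nil, if_neg]
    simpa using hc'
  | cons X β =>
    have hinj : Function.Injective (fun l : List Γ => l ++ β) :=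
      fun a b h => List.append_cancel_right h
    have hzero : ∀ x ∉ Set.range (fun l : List Γ => l ++ β),
        Δ.stepP σ π w (X :: β) x = 0 := fun x hx => stepP_out σ π w X β hx
    refine (hinj.summable_iff hzero).mp ?_
    have heq : (Δ.stepP σ π w (X :: β) ∘ fun l : List Γ => l ++ β) =
        fun α => if Δ.rule X α then Δ.choice σ π w (X :: β) α else 0 := by
      funext α
      exact stepP_apply σ π w X α β
    rw [heq]
    refine Summable.of_nonneg_of_le (fun α => ?_) (fun α => ?_)
      (summable_choice σ π w X β)
    · split
      · exact choice_nonneg σ π w _ _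
      · exact le_refl 0
    · split
      · exact le_refl _
      · exact choice_nonneg σ π w _ _

lemma tsum_stepP_le_one (c : List Γ) : ∑' c', Δ.stepP σ π w c c' ≤ 1 := by
  cases c with
  | nil =>
    have : ∑' c', Δ.stepP σ π w [] c' = 1 := by
      simp only [stepP_nil]
      exact tsum_ite_eq ([] : List Γ) 1
    rw [this]
  | cons X β =>
    have hinj : Function.Injective (fun l : List Γ => l ++ β) :=
      fun a b h => List.append_cancel_right h
    have hzero : Function.support (Δ.stepP σ π w (X :: β)) ⊆
        Set.range (fun l : List Γ => l ++ β) := by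
      intro x hx
      by_contra hr
      exact hx (stepP_out σ π w X β hr)
    have h1 : ∑' α : List Γ, Δ.stepP σ π w (X :: β) (α ++ β) =
        ∑' c', Δ.stepP σ π w (X :: β) c' := hinj.tsum_eq hzero
    rw [← h1]
    calc ∑' α : List Γ, Δ.stepP σ π w (X :: β) (α ++ β)
        ≤ ∑' α, Δ.choice σ π w (X :: β) α := by
          refine Summable.tsum_le_tsum (fun α => ?_) ?_ (summable_choice σ π w X β)
          · rw [stepP_apply]
            split
            · exact le_refl _
            · exact choice_nonneg σ π w _ _
          · have hzero' : ∀ x ∉ Set.range (fun l : List Γ => l ++ β),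
                Δ.stepP σ π w (X :: β) x = 0 := fun x hx => stepP_out σ π w X β hx
            exact (hinj.summable_iff hzero').mpr (summable_stepP σ π w (X :: β))
      _ = 1 := tsum_choice σ π w X β

variable (T : Set (List Γ))

lemma reachN_zero_def (c : List Γ) :
    Δ.reachN σ π T 0 w c = if c ∈ T then 1 else 0 := rfl

lemma reachN_succ_def (n : ℕ) (c : List Γ) :
    Δ.reachN σ π T (n + 1) w c = if c ∈ T then 1 else
      ∑' c', Δ.stepP σ π w c c' * Δ.reachN σ π T n (w ++ [c]) c' := rfl

lemma reachN_nonneg : ∀ (n : ℕ) (w : List (List Γ)) (c : List Γ),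
    0 ≤ Δ.reachN σ π T n w c := by
  intro n
  induction n with
  | zero =>
    intro w c
    rw [reachN_zero_def]
    split <;> norm_num
  | succ n ih =>
    intro w c
    rw [reachN_succ_def]
    split
    · norm_num
    · exact tsum_nonneg fun c' =>
        mul_nonneg (stepP_nonneg σ π w c c') (ih _ c')

lemma reachN_le_one : ∀ (n : ℕ) (w : List (List Γ)) (c : List Γ),
    Δ.reachN σ π T n w c ≤ 1 := by
  intro n
  induction n with
  | zero =>
    intro w c
    rw [reachN_zero_def]
    split <;> norm_num
  | succ n ih =>
    intro w c
    rw [reachN_succ_def]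
    split
    · exact le_refl 1
    · calc ∑' c', Δ.stepP σ π w c c' * Δ.reachN σ π T n (w ++ [c]) c'
          ≤ ∑' c', Δ.stepP σ π w c c' := by
            refine Summable.tsum_le_tsum (fun c' => ?_) ?_ (summable_stepP σ π w c)
            · exact mul_le_of_le_one_right (stepP_nonneg σ π w c c') (ih _ c')
            · refine Summable.of_nonneg_of_le
                (fun c' => mul_nonneg (stepP_nonneg σ π w c c')
                  (reachN_nonneg σ π T n _ c'))
                (fun c' => mul_le_of_le_one_right (stepP_nonneg σ π w c c')
                  (ih _ c'))
                (summable_stepP σ π w c)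
        _ ≤ 1 := tsum_stepP_le_one σ π w c

lemma summable_term (n : ℕ) (c : List Γ) :
    Summable (fun c' => Δ.stepP σ π w c c' * Δ.reachN σ π T n (w ++ [c]) c') :=
  Summable.of_nonneg_of_le
    (fun c' => mul_nonneg (stepP_nonneg σ π w c c') (reachN_nonneg σ π T n _ c'))
    (fun c' => mul_le_of_le_one_right (stepP_nonneg σ π w c c')
      (reachN_le_one σ π T n _ c'))
    (summable_stepP σ π w c)

lemma reachN_succ_ge (n : ℕ) (c : List Γ) (hc : c ∉ T) (c₀ : List Γ) :
    Δ.stepP σ π w c c₀ * Δ.reachN σ π T n (w ++ [c]) c₀ ≤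
      Δ.reachN σ π T (n + 1) w c := by
  rw [reachN_succ_def, if_neg hc]
  exact Summable.le_tsum (summable_term σ π w T n c) c₀ (fun c' _ =>
    mul_nonneg (stepP_nonneg σ π w c c') (reachN_nonneg σ π T n _ c'))

lemma reachN_le_reachP (n : ℕ) (c : List Γ) :
    Δ.reachN σ π T n [] c ≤ Δ.reachP σ π T c := by
  have hbdd : BddAbove (Set.range (fun n => Δ.reachN σ π T n [] c)) := by
    refine ⟨1, ?_⟩
    rintro x ⟨m, rfl⟩
    exact reachN_le_one σ π T m [] c
  exact le_ciSup hbdd n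

lemma reachP_nonneg (c : List Γ) : 0 ≤ Δ.reachP σ π T c := by
  exact le_trans (reachN_nonneg σ π T 0 [] c) (reachN_le_reachP σ π T 0 c)

end BPA

end Analysis
section Strategies

variable {Γ : Type*} [Fintype Γ]

lemma exB (Δ : BPA Γ) (T : Set (List Γ)) (X : Γ) (β : List Γ) :
    ∃ α, Δ.rule X α ∧ ((X :: β) ∉ T → (Δ.isBox X ∨ Δ.isCirc X) →
      ∀ n, (X :: β) ∈ attrN Δ T (n + 1) → α ++ β ∈ attrN Δ T n) := by
  classical
  by_cases hin : ∃ n, (X :: β) ∈ attrN Δ T n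
  swap
  · obtain ⟨α, hα⟩ := Δ.rule_total X
    exact ⟨α, hα, fun _ _ n hn => absurd ⟨n + 1, hn⟩ hin⟩
  by_cases hc : (X :: β) ∈ T
  · obtain ⟨α, hα⟩ := Δ.rule_total X
    exact ⟨α, hα, fun h => absurd hc h⟩
  by_cases hbc : Δ.isBox X ∨ Δ.isCirc X
  swap
  · obtain ⟨α, hα⟩ := Δ.rule_total X
    exact ⟨α, hα, fun _ h => absurd h hbc⟩
  -- minimal rank
  have hfind := Nat.find_spec hin
  set m := Nat.find hin with hm
  have hm0 : m ≠ 0 := by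
    intro h
    rw [h] at hfind
    simp [attrN] at hfind
  obtain ⟨k, hk⟩ := Nat.exists_eq_succ_of_ne_zero hm0
  rw [hk] at hfind
  rcases hfind with h | ⟨X', β', he, h⟩
  · exact absurd h hc
  injection he with h1 h2
  subst h1
  subst h2
  rcases h with ⟨-, α, hr, hs⟩ | ⟨hd, -⟩
  · refine ⟨α, hr, fun _ _ n hn => ?_⟩
    have : m ≤ n + 1 := Nat.find_le hn
    have hkn : k ≤ n := by omega
    exact attrN_mono Δ T hkn hs
  · exfalso
    rcases hbc with hB | hC
    · exact Δ.disjBD X ⟨hB, hd⟩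
    · exact Δ.disjDC X ⟨hd, hC⟩

lemma exD (Δ : BPA Γ) (T : Set (List Γ)) (X : Γ) (β : List Γ) :
    ∃ α, Δ.rule X α ∧ (Δ.isDiamond X → (X :: β) ∉ attr Δ T →
      α ++ β ∉ attr Δ T) := by
  classical
  by_cases hd : Δ.isDiamond X
  swap
  · obtain ⟨α, hα⟩ := Δ.rule_total X
    exact ⟨α, hα, fun h => absurd h hd⟩
  by_cases hin : (X :: β) ∈ attr Δ T
  · obtain ⟨α, hα⟩ := Δ.rule_total X
    exact ⟨α, hα, fun _ h => absurd hin h⟩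
  · have hns := not_mem_attr_elim hin
    simp only [attrStep, Set.mem_union, Set.mem_setOf_eq, not_or] at hns
    by_contra hcon
    push_neg at hcon
    refine hns.2 ⟨X, β, rfl, Or.inr ⟨hd, fun α hr => ?_⟩⟩
    exact (hcon α hr).2.2

/-- Pick function for the Box strategy. -/
noncomputable def pickB (Δ : BPA Γ) (T : Set (List Γ)) : List Γ → List Γ
  | [] => []
  | X :: β => Classical.choose (exB Δ T X β)

/-- Pick function for the Diamond spoiling strategy. -/
noncomputable def pickD (Δ : BPA Γ) (T : Set (List Γ)) : List Γ → List Γ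
  | [] => []
  | X :: β => Classical.choose (exD Δ T X β)

/-- The attractor-following Box strategy. -/
noncomputable def sigmaStar (Δ : BPA Γ) (T : Set (List Γ)) : Δ.Strat Δ.isBox where
  f _ c α := if α = pickB Δ T c then 1 else 0
  nonneg := by
    intro w c α
    split <;> norm_num
  supp := by
    intro w X β α _ hne
    have hα : α = pickB Δ T (X :: β) := by
      by_contra h
      simp [h] at hne
    rw [hα]
    exact (Classical.choose_spec (exB Δ T X β)).1
  sum_one := by
    intro w X β _
    exact tsum_ite_eq (pickB Δ T (X :: β)) 1

/-- The attractor-avoiding Diamond strategy. -/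
noncomputable def piStar (Δ : BPA Γ) (T : Set (List Γ)) : Δ.Strat Δ.isDiamond where
  f _ c α := if α = pickD Δ T c then 1 else 0
  nonneg := by
    intro w c α
    split <;> norm_num
  supp := by
    intro w X β α _ hne
    have hα : α = pickD Δ T (X :: β) := by
      by_contra h
      simp [h] at hne
    rw [hα]
    exact (Classical.choose_spec (exD Δ T X β)).1
  sum_one := by
    intro w X β _
    exact tsum_ite_eq (pickD Δ T (X :: β)) 1

lemma pickB_spec (Δ : BPA Γ) (T : Set (List Γ)) (X : Γ) (β : List Γ) :
    Δ.rule X (pickB Δ T (X :: β)) ∧ ((X :: β) ∉ T → (Δ.isBox X ∨ Δ.isCirc X) →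
      ∀ n, (X :: β) ∈ attrN Δ T (n + 1) → pickB Δ T (X :: β) ++ β ∈ attrN Δ T n) :=
  Classical.choose_spec (exB Δ T X β)

lemma pickD_spec (Δ : BPA Γ) (T : Set (List Γ)) (X : Γ) (β : List Γ) :
    Δ.rule X (pickD Δ T (X :: β)) ∧ (Δ.isDiamond X → (X :: β) ∉ attr Δ T →
      pickD Δ T (X :: β) ++ β ∉ attr Δ T) :=
  Classical.choose_spec (exD Δ T X β)

namespace BPA

/-- Against `piStar`, a configuration outside the attractor never reaches `T`. -/
lemma reachN_eq_zero_of_not_attr {Δ : BPA Γ} (T : Set (List Γ))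
    (σ : Δ.Strat Δ.isBox) :
    ∀ (n : ℕ) (w : List (List Γ)) (c : List Γ), c ∉ attr Δ T →
      Δ.reachN σ (piStar Δ T) T n w c = 0 := by
  intro n
  induction n with
  | zero =>
    intro w c hc
    rw [reachN_zero_def, if_neg (fun h => hc (target_subset_attr Δ T h))]
  | succ n ih =>
    intro w c hc
    rw [reachN_succ_def, if_neg (fun h => hc (target_subset_attr Δ T h))]
    convert tsum_zero with c'
    by_cases hs : Δ.stepP σ (piStar Δ T) w c c' = 0
    · rw [hs, zero_mul]
    cases c with
    | nil =>
      rw [stepP_nil] at hs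
      have hc' : c' = [] := by
        by_contra h
        rw [if_neg h] at hs
        exact hs rfl
      rw [hc', ih _ [] hc, mul_zero]
    | cons X β =>
      obtain ⟨α, rfl, hr, hch⟩ := stepP_ne_zero σ (piStar Δ T) w hs
      have key : α ++ β ∉ attr Δ T := by
        rcases Δ.cover X with hB | hD | hC
        · intro hmem
          exact not_mem_attr_elim hc
            (Or.inr ⟨X, β, rfl, Or.inl ⟨Or.inl hB, α, hr, hmem⟩⟩)
        · have hnB : ¬ Δ.isBox X := fun h => Δ.disjBD X ⟨h, hD⟩
          have hch' : Δ.choice σ (piStar Δ T) w (X :: β) α =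
              (piStar Δ T).f w (X :: β) α := by
            show (if Δ.isBox X then σ.f w (X :: β) α
              else if Δ.isDiamond X then (piStar Δ T).f w (X :: β) α
              else Δ.prob X α) = _
            rw [if_neg hnB, if_pos hD]
          rw [hch'] at hch
          have hα : α = pickD Δ T (X :: β) := by
            by_contra h
            exact hch (by simp [piStar, h])
          rw [hα]
          exact (pickD_spec Δ T X β).2 hD hc
        · intro hmem
          exact not_mem_attr_elim hc
            (Or.inr ⟨X, β, rfl, Or.inl ⟨Or.inr hC, α, hr, hmem⟩⟩)
      rw [ih _ _ key, mul_zero]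

end BPA

end Strategies
section Equivalence

variable {Γ : Type*} [Fintype Γ]

namespace BPA

lemma choice_box {Δ : BPA Γ} (σ : Δ.Strat Δ.isBox) (π : Δ.Strat Δ.isDiamond)
    (w : List (List Γ)) {X : Γ} (β α : List Γ) (hB : Δ.isBox X) :
    Δ.choice σ π w (X :: β) α = σ.f w (X :: β) α := by
  show (if Δ.isBox X then σ.f w (X :: β) α
    else if Δ.isDiamond X then π.f w (X :: β) α else Δ.prob X α) = _
  rw [if_pos hB]

lemma choice_diamond {Δ : BPA Γ} (σ : Δ.Strat Δ.isBox) (π : Δ.Strat Δ.isDiamond)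
    (w : List (List Γ)) {X : Γ} (β α : List Γ) (hD : Δ.isDiamond X) :
    Δ.choice σ π w (X :: β) α = π.f w (X :: β) α := by
  show (if Δ.isBox X then σ.f w (X :: β) α
    else if Δ.isDiamond X then π.f w (X :: β) α else Δ.prob X α) = _
  rw [if_neg (fun h => Δ.disjBD X ⟨h, hD⟩), if_pos hD]

lemma choice_circ {Δ : BPA Γ} (σ : Δ.Strat Δ.isBox) (π : Δ.Strat Δ.isDiamond)
    (w : List (List Γ)) {X : Γ} (β α : List Γ) (hC : Δ.isCirc X) :
    Δ.choice σ π w (X :: β) α = Δ.prob X α := by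
  show (if Δ.isBox X then σ.f w (X :: β) α
    else if Δ.isDiamond X then π.f w (X :: β) α else Δ.prob X α) = _
  rw [if_neg (fun h => Δ.disjBC X ⟨h, hC⟩),
    if_neg (fun h => Δ.disjDC X ⟨h, hC⟩)]

/-- With `sigmaStar`, from the `n`-th attractor stage the target is reached
within `n` steps with positive probability. -/
lemma reachN_pos_of_attrN {Δ : BPA Γ} (T : Set (List Γ))
    (π : Δ.Strat Δ.isDiamond) :
    ∀ (n : ℕ) (w : List (List Γ)) (c : List Γ), c ∈ attrN Δ T n →
      0 < Δ.reachN (sigmaStar Δ T) π T n w c := by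
  intro n
  induction n with
  | zero =>
    intro w c hc
    simp [attrN] at hc
  | succ n ih =>
    intro w c hc
    by_cases hT : c ∈ T
    · rw [reachN_succ_def, if_pos hT]
      norm_num
    rcases hc with hc | ⟨X, β, rfl, hc⟩
    · exact absurd hc hT
    set σ := sigmaStar Δ T with hσ
    have hpos : ∃ c₀, 0 < Δ.stepP σ π w (X :: β) c₀ *
        Δ.reachN σ π T n (w ++ [X :: β]) c₀ := by
      rcases hc with ⟨hbc, α, hr, hs⟩ | ⟨hd, hall⟩
      · rcases hbc with hB | hC
        · -- Box: use the picked rule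
          have hspec := pickB_spec Δ T X β
          set α₀ := pickB Δ T (X :: β) with hα₀
          have hmem : α₀ ++ β ∈ attrN Δ T n :=
            hspec.2 hT (Or.inl hB) n (Or.inr ⟨X, β, rfl, Or.inl ⟨Or.inl hB, α, hr, hs⟩⟩)
          refine ⟨α₀ ++ β, mul_pos ?_ (ih _ _ hmem)⟩
          rw [stepP_apply_rule σ π w β hspec.1, choice_box σ π w β α₀ hB]
          have : σ.f w (X :: β) α₀ = 1 := by
            simp [hσ, sigmaStar, hα₀]
          rw [this]
          norm_num
        · -- Circle: use the witness rule
          refine ⟨α ++ β, mul_pos ?_ (ih _ _ hs)⟩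
          rw [stepP_apply_rule σ π w β hr, choice_circ σ π w β α hC]
          exact (Δ.prob_supp X α hC).mpr hr
      · -- Diamond: any rule π plays has positive probability
        have hsum : ∑' α, π.f w (X :: β) α = 1 := π.sum_one w X β hd
        obtain ⟨α, hα⟩ := exists_ne_zero_of_tsum_ne_zero
          (f := fun α => π.f w (X :: β) α) (by rw [hsum]; norm_num)
        have hr : Δ.rule X α := π.supp w X β α hd hα
        refine ⟨α ++ β, mul_pos ?_ (ih _ _ (hall α hr))⟩
        rw [stepP_apply_rule σ π w β hr, choice_diamond σ π w β α hd]
        exact lt_of_le_of_ne (π.nonneg w (X :: β) α) (Ne.symm hα)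
    obtain ⟨c₀, hc₀⟩ := hpos
    exact lt_of_lt_of_le hc₀ (reachN_succ_ge σ π w T n (X :: β) hT c₀)

/-- Layer 1: the positive-probability winning region of Box is exactly the
alternating reachability attractor. -/
lemma WBoxPos_eq_attr (Δ : BPA Γ) (T : Set (List Γ)) :
    Δ.WBoxPos T = attr Δ T := by
  ext c
  constructor
  · rintro ⟨σ, hσ⟩
    by_contra hc
    have h0 : Δ.reachP σ (piStar Δ T) T c = 0 := by
      have : ∀ n, Δ.reachN σ (piStar Δ T) T n [] c = 0 :=
        fun n => reachN_eq_zero_of_not_attr T σ n [] c hc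
      rw [BPA.reachP]
      simp only [this]
      exact ciSup_const
    have := hσ (piStar Δ T)
    rw [h0] at this
    exact lt_irrefl 0 this
  · intro hc
    rcases Set.mem_iUnion.mp hc with ⟨n, hn⟩
    refine ⟨sigmaStar Δ T, fun π => ?_⟩
    exact lt_of_lt_of_le (reachN_pos_of_attrN T π n [] c hn)
      (reachN_le_reachP (sigmaStar Δ T) π T n c)

end BPA

end Equivalence
section Words

variable {Γ : Type*} [Fintype Γ]

/-- `c ∈ B*AΓ*`. -/
def inAB (A B : Set Γ) (c : List Γ) : Prop :=
  ∃ b a t, c = b ++ a :: t ∧ (∀ x ∈ b, x ∈ B) ∧ a ∈ A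

lemma mem_kstar_symLang {B : Set Γ} {c : List Γ} :
    c ∈ KStar.kstar (symLang B) ↔ ∀ x ∈ c, x ∈ B := by
  rw [Language.mem_kstar]
  constructor
  · rintro ⟨L, rfl, hL⟩ x hx
    rw [List.mem_flatten] at hx
    obtain ⟨l, hl, hxl⟩ := hx
    obtain ⟨y, hy, rfl⟩ := hL l hl
    rw [List.mem_singleton] at hxl
    exact hxl ▸ hy
  · intro h
    refine ⟨c.map (fun x => [x]), ?_, ?_⟩
    · clear h
      induction c with
      | nil => rfl
      | cons x c ih => simpa using ih
    · intro y hy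
      rw [List.mem_map] at hy
      obtain ⟨x, hx, rfl⟩ := hy
      exact ⟨x, h x hx, rfl⟩

lemma mem_LA {A B : Set Γ} {c : List Γ} :
    c ∈ KStar.kstar (symLang B) * symLang A * (⊤ : Language Γ) ↔ inAB A B c := by
  constructor
  · intro h
    rw [Language.mem_mul] at h
    obtain ⟨u, hu, t, -, rfl⟩ := h
    rw [Language.mem_mul] at hu
    obtain ⟨b, hb, v, hv, rfl⟩ := hu
    obtain ⟨a, ha, rfl⟩ := hv
    exact ⟨b, a, t, by simp, mem_kstar_symLang.mp hb, ha⟩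
  · rintro ⟨b, a, t, rfl, hb, ha⟩
    rw [Language.mem_mul]
    refine ⟨b ++ [a], ?_, t, trivial, by simp⟩
    rw [Language.mem_mul]
    exact ⟨b, mem_kstar_symLang.mpr hb, [a], ⟨a, ha, rfl⟩, rfl⟩

lemma mem_LB {A B : Set Γ} {c : List Γ} :
    c ∈ KStar.kstar (symLang B) * symLang A * (⊤ : Language Γ)
        + KStar.kstar (symLang B) ↔ inAB A B c ∨ ∀ x ∈ c, x ∈ B := by
  rw [Language.mem_add, mem_LA, mem_kstar_symLang]

lemma inAB_head {A B : Set Γ} {a : Γ} (ha : a ∈ A) (t : List Γ) :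
    inAB A B (a :: t) := ⟨[], a, t, rfl, by simp, ha⟩

lemma inAB_cons {A B : Set Γ} {x : Γ} {t : List Γ} (hx : x ∈ B)
    (ht : inAB A B t) : inAB A B (x :: t) := by
  obtain ⟨b, a, s, rfl, hb, ha⟩ := ht
  refine ⟨x :: b, a, s, rfl, ?_, ha⟩
  intro y hy
  rcases List.mem_cons.mp hy with rfl | hy
  · exact hx
  · exact hb y hy

lemma inAB_singleton {A B : Set Γ} {X : Γ} (h : inAB A B [X]) : X ∈ A := by
  obtain ⟨b, a, t, he, hb, ha⟩ := h
  cases b with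
  | nil =>
    injection he with h1 h2
    exact h1 ▸ ha
  | cons y b' =>
    injection he with h1 h2
    exact absurd h2 (by simp)

lemma inAB_mono {A A' B : Set Γ} (h : A ⊆ A') {c : List Γ}
    (hc : inAB A B c) : inAB A' B c := by
  obtain ⟨b, a, t, rfl, hb, ha⟩ := hc
  exact ⟨b, a, t, rfl, hb, h ha⟩

lemma inAB_append_cases {A B : Set Γ} {α β : List Γ} (h : inAB A B (α ++ β)) :
    inAB A B α ∨ ((∀ x ∈ α, x ∈ B) ∧ inAB A B β) := by
  obtain ⟨b, a, t, he, hb, ha⟩ := h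
  rcases List.append_eq_append_iff.mp he with ⟨w, hw1, hw2⟩ | ⟨w, hw1, hw2⟩
  · -- b = α ++ w, β = w ++ a :: t
    right
    subst hw1
    refine ⟨fun x hx => hb x (List.mem_append.mpr (Or.inl hx)),
      w, a, t, hw2, fun x hx => hb x (List.mem_append.mpr (Or.inr hx)), ha⟩
  · -- α = b ++ w, a :: t = w ++ β
    cases w with
    | nil =>
      right
      simp only [List.append_nil] at hw1
      simp only [List.nil_append] at hw2
      subst hw1
      exact ⟨hb, [], a, t, hw2.symm, by simp, ha⟩
    | cons y w' =>
      left
      injection hw2 with h1 h2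
      subst h1
      exact ⟨b, a, w', hw1, hb, ha⟩

lemma inB_append_cases {B : Set Γ} {α β : List Γ}
    (h : ∀ x ∈ α ++ β, x ∈ B) :
    (∀ x ∈ α, x ∈ B) ∧ (∀ x ∈ β, x ∈ B) :=
  ⟨fun x hx => h x (List.mem_append.mpr (Or.inl hx)),
   fun x hx => h x (List.mem_append.mpr (Or.inr hx))⟩

end Words
section Composition

variable {Γ : Type*} [Fintype Γ]

/-- Appending a suffix preserves attractor membership for top-closed targets. -/
lemma attrN_append {Δ : BPA Γ} {T : Set (List Γ)}
    (hTop : ∀ c ∈ T, ∀ γ : List Γ, c ++ γ ∈ T) :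
    ∀ (n : ℕ) (c γ : List Γ), c ∈ attrN Δ T n → c ++ γ ∈ attrN Δ T n := by
  intro n
  induction n with
  | zero => intro c γ hc; simp [attrN] at hc
  | succ n ih =>
    rintro c γ (hc | ⟨X, β, rfl, hc⟩)
    · exact Or.inl (hTop c hc γ)
    refine Or.inr ⟨X, β ++ γ, by simp, ?_⟩
    rcases hc with ⟨hbc, α, hr, hs⟩ | ⟨hd, hall⟩
    · refine Or.inl ⟨hbc, α, hr, ?_⟩
      rw [← List.append_assoc]
      exact ih _ γ hs
    · refine Or.inr ⟨hd, fun α hr => ?_⟩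
      rw [← List.append_assoc]
      exact ih _ γ (hall α hr)

lemma attr_append {Δ : BPA Γ} {T : Set (List Γ)}
    (hTop : ∀ c ∈ T, ∀ γ : List Γ, c ++ γ ∈ T) {c : List Γ} (γ : List Γ)
    (hc : c ∈ attr Δ T) : c ++ γ ∈ attr Δ T := by
  rcases Set.mem_iUnion.mp hc with ⟨n, hn⟩
  exact attrN_subset_attr Δ T n (attrN_append hTop n c γ hn)

lemma topLang_top_closed (ΓT : Set Γ) :
    ∀ c ∈ topLang ΓT, ∀ γ : List Γ, c ++ γ ∈ topLang ΓT := by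
  rintro c ⟨X, β, rfl, hX⟩ γ
  exact ⟨X, β ++ γ, by simp, hX⟩

/-- Composition: a configuration winning for the `T ∪ {ε}` game, stacked on
top of a configuration in the attractor of `U`, is in the attractor of `U`. -/
lemma attrN_eps_append {Δ : BPA Γ} {ΓT : Set Γ} {U : Set (List Γ)}
    (hU : ∀ (X : Γ) (β : List Γ), X ∈ ΓT → (X :: β) ∈ U) :
    ∀ (n : ℕ) (c : List Γ),
      c ∈ attrN Δ (topLang ΓT ∪ {([] : List Γ)}) n →
      ∀ γ ∈ attr Δ U, c ++ γ ∈ attr Δ U := by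
  intro n
  induction n with
  | zero => intro c hc; simp [attrN] at hc
  | succ n ih =>
    rintro c (hc | ⟨X, β, rfl, hc⟩) γ hγ
    · rcases hc with ⟨X, β, rfl, hX⟩ | hc
      · exact target_subset_attr Δ U (by simpa using hU X (β ++ γ) hX)
      · rw [Set.mem_singleton_iff.mp hc]
        simpa using hγ
    rcases hc with ⟨hbc, α, hr, hs⟩ | ⟨hd, hall⟩
    · refine attr_prefixed Δ U (Or.inr ⟨X, β ++ γ, by simp, Or.inl ⟨hbc, α, hr, ?_⟩⟩)
      rw [← List.append_assoc]
      exact ih _ hs γ hγ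
    · refine attr_prefixed Δ U (Or.inr ⟨X, β ++ γ, by simp, Or.inr ⟨hd, fun α hr => ?_⟩⟩)
      rw [← List.append_assoc]
      exact ih _ (hall α hr) γ hγ

lemma attr_eps_append {Δ : BPA Γ} {ΓT : Set Γ} {U : Set (List Γ)}
    (hU : ∀ (X : Γ) (β : List Γ), X ∈ ΓT → (X :: β) ∈ U) {c : List Γ}
    (hc : c ∈ attr Δ (topLang ΓT ∪ {([] : List Γ)}))
    {γ : List Γ} (hγ : γ ∈ attr Δ U) : c ++ γ ∈ attr Δ U := by
  rcases Set.mem_iUnion.mp hc with ⟨n, hn⟩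
  exact attrN_eps_append hU n c hn γ hγ

/-- `B*AΓ* ⊆ Attr(T)` for the canonical `A`, `B`. -/
lemma inAB_subset_attr {Δ : BPA Γ} (ΓT : Set Γ) {c : List Γ}
    (hc : inAB {X | [X] ∈ attr Δ (topLang ΓT)}
      {X | [X] ∈ attr Δ (topLang ΓT ∪ {([] : List Γ)})} c) :
    c ∈ attr Δ (topLang ΓT) := by
  obtain ⟨b, a, t, rfl, hb, ha⟩ := hc
  induction b with
  | nil =>
    have := attr_append (topLang_top_closed ΓT) t ha
    simpa using this
  | cons y b ih =>
    have hy : [y] ∈ attr Δ (topLang ΓT ∪ {([] : List Γ)}) :=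
      hb y List.mem_cons_self
    have htail : b ++ a :: t ∈ attr Δ (topLang ΓT) :=
      ih (fun x hx => hb x (List.mem_cons_of_mem y hx))
    have hU : ∀ (X : Γ) (β : List Γ), X ∈ ΓT → (X :: β) ∈ topLang ΓT :=
      fun X β hX => ⟨X, β, rfl, hX⟩
    simpa using attr_eps_append hU hy htail

/-- `B* ⊆ Attr(T ∪ {ε})` for the canonical `B`. -/
lemma inB_subset_attr_eps {Δ : BPA Γ} (ΓT : Set Γ) {c : List Γ}
    (hc : ∀ x ∈ c, [x] ∈ attr Δ (topLang ΓT ∪ {([] : List Γ)})) :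
    c ∈ attr Δ (topLang ΓT ∪ {([] : List Γ)}) := by
  induction c with
  | nil => exact target_subset_attr Δ _ (Or.inr rfl)
  | cons y b ih =>
    have hy : [y] ∈ attr Δ (topLang ΓT ∪ {([] : List Γ)}) :=
      hc y List.mem_cons_self
    have htail : b ∈ attr Δ (topLang ΓT ∪ {([] : List Γ)}) :=
      ih (fun x hx => hc x (List.mem_cons_of_mem y hx))
    have hU : ∀ (X : Γ) (β : List Γ), X ∈ ΓT →
        (X :: β) ∈ (topLang ΓT ∪ {([] : List Γ)} : Set (List Γ)) :=
      fun X β hX => Or.inl ⟨X, β, rfl, hX⟩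
    simpa using attr_eps_append hU hy htail

end Composition
section Leastness

variable {Γ : Type*} [Fintype Γ]

lemma invA {Δ : BPA Γ} {ΓT : Set Γ} {p : Set Γ × Set Γ}
    (hGT : ΓT ⊆ p.1)
    (hS1 : ∀ X, (Δ.isBox X ∨ Δ.isCirc X) → ∀ β, Δ.rule X β →
      inAB p.1 p.2 β → X ∈ p.1)
    (hS2 : ∀ X, Δ.isDiamond X → (∀ β, Δ.rule X β → inAB p.1 p.2 β) → X ∈ p.1)
    (hS1' : ∀ X, (Δ.isBox X ∨ Δ.isCirc X) → ∀ β, Δ.rule X β →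
      (inAB p.1 p.2 β ∨ ∀ x ∈ β, x ∈ p.2) → X ∈ p.2)
    (hS2' : ∀ X, Δ.isDiamond X →
      (∀ β, Δ.rule X β → (inAB p.1 p.2 β ∨ ∀ x ∈ β, x ∈ p.2)) → X ∈ p.2) :
    ∀ (n : ℕ) (c : List Γ), c ∈ attrN Δ (topLang ΓT) n → inAB p.1 p.2 c := by
  intro n
  induction n with
  | zero => intro c hc; simp [attrN] at hc
  | succ n ih =>
    rintro c (⟨X, β, rfl, hX⟩ | ⟨X, β, rfl, hc⟩)
    · exact inAB_head (hGT hX) β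
    rcases hc with ⟨hbc, α, hr, hs⟩ | ⟨hd, hall⟩
    · rcases inAB_append_cases (ih _ hs) with hα | ⟨hαB, hβ⟩
      · exact inAB_head (hS1 X hbc α hr hα) β
      · exact inAB_cons (hS1' X hbc α hr (Or.inr hαB)) hβ
    · by_cases hcase : ∀ α, Δ.rule X α → inAB p.1 p.2 α
      · exact inAB_head (hS2 X hd hcase) β
      · push_neg at hcase
        obtain ⟨α₀, hr₀, hn₀⟩ := hcase
        have hβ : inAB p.1 p.2 β := by
          rcases inAB_append_cases (ih _ (hall α₀ hr₀)) with h | ⟨-, h⟩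
          · exact absurd h hn₀
          · exact h
        have hX2 : X ∈ p.2 := hS2' X hd (fun α hr =>
          (inAB_append_cases (ih _ (hall α hr))).imp id And.left)
        exact inAB_cons hX2 hβ

lemma invB {Δ : BPA Γ} {ΓT : Set Γ} {p : Set Γ × Set Γ}
    (hGT : ΓT ⊆ p.1) (hGT2 : ΓT ⊆ p.2)
    (hS1 : ∀ X, (Δ.isBox X ∨ Δ.isCirc X) → ∀ β, Δ.rule X β →
      inAB p.1 p.2 β → X ∈ p.1)
    (hS2 : ∀ X, Δ.isDiamond X → (∀ β, Δ.rule X β → inAB p.1 p.2 β) → X ∈ p.1)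
    (hS1' : ∀ X, (Δ.isBox X ∨ Δ.isCirc X) → ∀ β, Δ.rule X β →
      (inAB p.1 p.2 β ∨ ∀ x ∈ β, x ∈ p.2) → X ∈ p.2)
    (hS2' : ∀ X, Δ.isDiamond X →
      (∀ β, Δ.rule X β → (inAB p.1 p.2 β ∨ ∀ x ∈ β, x ∈ p.2)) → X ∈ p.2) :
    ∀ (n : ℕ) (c : List Γ), c ∈ attrN Δ (topLang ΓT ∪ {([] : List Γ)}) n →
      inAB (p.1 ∩ p.2) p.2 c ∨ ∀ x ∈ c, x ∈ p.2 := by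
  intro n
  induction n with
  | zero => intro c hc; simp [attrN] at hc
  | succ n ih =>
    rintro c (hc | ⟨X, β, rfl, hc⟩)
    · rcases hc with ⟨X, β, rfl, hX⟩ | hc
      · exact Or.inl (inAB_head (Set.mem_inter (hGT hX) (hGT2 hX)) β)
      · rw [Set.mem_singleton_iff.mp hc]
        exact Or.inr (by simp)
    rcases hc with ⟨hbc, α, hr, hs⟩ | ⟨hd, hall⟩
    · rcases ih _ hs with hin | hB
      · rcases inAB_append_cases hin with hα | ⟨hαB, hβ⟩
        · have h1 : X ∈ p.1 :=
            hS1 X hbc α hr (inAB_mono Set.inter_subset_left hα)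
          have h2 : X ∈ p.2 :=
            hS1' X hbc α hr (Or.inl (inAB_mono Set.inter_subset_left hα))
          exact Or.inl (inAB_head (Set.mem_inter h1 h2) β)
        · have h2 : X ∈ p.2 := hS1' X hbc α hr (Or.inr hαB)
          exact Or.inl (inAB_cons h2 hβ)
      · obtain ⟨hαB, hβB⟩ := inB_append_cases hB
        have h2 : X ∈ p.2 := hS1' X hbc α hr (Or.inr hαB)
        refine Or.inr (fun x hx => ?_)
        rcases List.mem_cons.mp hx with rfl | hx
        · exact h2
        · exact hβB x hx
    · have hQ : ∀ α, Δ.rule X α →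
          inAB (p.1 ∩ p.2) p.2 α ∨ ∀ x ∈ α, x ∈ p.2 := by
        intro α hr
        rcases ih _ (hall α hr) with hin | hB
        · exact (inAB_append_cases hin).imp id And.left
        · exact Or.inr (inB_append_cases hB).1
      have hX2 : X ∈ p.2 := hS2' X hd (fun α hr =>
        (hQ α hr).imp (inAB_mono Set.inter_subset_left) id)
      by_cases hcase : ∀ α, Δ.rule X α → inAB (p.1 ∩ p.2) p.2 α
      · have hX1 : X ∈ p.1 := hS2 X hd (fun α hr =>
          inAB_mono Set.inter_subset_left (hcase α hr))
        exact Or.inl (inAB_head (Set.mem_inter hX1 hX2) β)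
      · push_neg at hcase
        obtain ⟨α₀, hr₀, hn₀⟩ := hcase
        rcases ih _ (hall α₀ hr₀) with hin | hB
        · rcases inAB_append_cases hin with hα | ⟨-, hβ⟩
          · exact absurd hα hn₀
          · exact Or.inl (inAB_cons hX2 hβ)
        · have hβB := (inB_append_cases hB).2
          refine Or.inr (fun x hx => ?_)
          rcases List.mem_cons.mp hx with rfl | hx
          · exact hX2
          · exact hβB x hx

end Leastness
/-- The pair `(A,B)` with `A = W_Box(T,>0) ∩ Γ`, `B = W_Box(T_ε,>0) ∩ Γ` is
the least fixed point of the monotone operator `F` on `2^Γ × 2^Γ`. -/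
theorem AB_least_fixed_point_of_Fop {Γ : Type*} [Fintype Γ] (Δ : BPA Γ)
    (ΓT : Set Γ) (hT : ∀ R ∈ ΓT, ∀ α, Δ.rule R α ↔ α = [R])
    (A B : Set Γ)
    (hA : A = {X | [X] ∈ Δ.WBoxPos (topLang ΓT)})
    (hB : B = {X | [X] ∈ Δ.WBoxPos (topLang ΓT ∪ {([] : List Γ)})}) :
    Fop Δ ΓT (A, B) = (A, B) ∧
      ∀ p : Set Γ × Set Γ, Fop Δ ΓT p = p → A ⊆ p.1 ∧ B ⊆ p.2 := by
  have hA' : A = {X | [X] ∈ attr Δ (topLang ΓT)} := by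
    rw [hA]
    exact congrArg (fun S : Set (List Γ) => {X : Γ | [X] ∈ S}) (BPA.WBoxPos_eq_attr Δ _)
  have hB' : B = {X | [X] ∈ attr Δ ((topLang ΓT ∪ {([] : List Γ)} : Set (List Γ)))} := by
    rw [hB]
    exact congrArg (fun S : Set (List Γ) => {X : Γ | [X] ∈ S}) (BPA.WBoxPos_eq_attr Δ _)
  have hAttrA : ∀ c, inAB A B c → c ∈ attr Δ (topLang ΓT) := by
    intro c hc
    rw [hA', hB'] at hc
    exact inAB_subset_attr ΓT hc
  have hAttrB : ∀ c, (inAB A B c ∨ ∀ x ∈ c, x ∈ B) →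
      c ∈ attr Δ ((topLang ΓT ∪ {([] : List Γ)} : Set (List Γ))) := by
    rintro c (hc | hc)
    · exact attr_mono_T Set.subset_union_left (hAttrA c hc)
    · refine inB_subset_attr_eps ΓT (fun x hx => ?_)
      have := hc x hx
      rw [hB'] at this
      exact this
  constructor
  · -- fixed point
    refine Prod.ext ?_ ?_
    · -- first component
      show ΓT ∪ A ∪ _ ∪ _ = A
      apply Set.Subset.antisymm
      · rintro X (((hX | hX) | hX) | hX)
        · rw [hA']
          exact target_subset_attr Δ _ ⟨X, [], rfl, hX⟩
        · exact hX
        · obtain ⟨hbc, β, hr, hm⟩ := hX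
          have hβ : β ∈ attr Δ (topLang ΓT) := hAttrA β (mem_LA.mp hm)
          rw [hA']
          exact attr_prefixed Δ _
            (Or.inr ⟨X, [], rfl, Or.inl ⟨hbc, β, hr, by simpa using hβ⟩⟩)
        · obtain ⟨hd, hall⟩ := hX
          rw [hA']
          refine attr_prefixed Δ _
            (Or.inr ⟨X, [], rfl, Or.inr ⟨hd, fun α hr' => ?_⟩⟩)
          simpa using hAttrA α (mem_LA.mp (hall α hr'))
      · intro X hX
        exact Set.mem_union_left _ (Set.mem_union_left _
          (Set.mem_union_right _ hX))
    · -- second component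
      show ΓT ∪ B ∪ _ ∪ _ = B
      apply Set.Subset.antisymm
      · rintro X (((hX | hX) | hX) | hX)
        · rw [hB']
          exact target_subset_attr Δ _ (Or.inl ⟨X, [], rfl, hX⟩)
        · exact hX
        · obtain ⟨hbc, β, hr, hm⟩ := hX
          have hβ := hAttrB β (mem_LB.mp hm)
          rw [hB']
          exact attr_prefixed Δ _
            (Or.inr ⟨X, [], rfl, Or.inl ⟨hbc, β, hr, by simpa using hβ⟩⟩)
        · obtain ⟨hd, hall⟩ := hX
          rw [hB']
          refine attr_prefixed Δ _
            (Or.inr ⟨X, [], rfl, Or.inr ⟨hd, fun α hr' => ?_⟩⟩)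
          simpa using hAttrB α (mem_LB.mp (hall α hr'))
      · intro X hX
        exact Set.mem_union_left _ (Set.mem_union_left _
          (Set.mem_union_right _ hX))
  · -- leastness
    intro p hp
    have hsub1 : (Fop Δ ΓT p).1 ⊆ p.1 := (congrArg Prod.fst hp).subset
    have hsub2 : (Fop Δ ΓT p).2 ⊆ p.2 := (congrArg Prod.snd hp).subset
    have hGT1 : ΓT ⊆ p.1 := fun X hX => hsub1
      (Set.mem_union_left _ (Set.mem_union_left _ (Set.mem_union_left _ hX)))
    have hGT2 : ΓT ⊆ p.2 := fun X hX => hsub2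
      (Set.mem_union_left _ (Set.mem_union_left _ (Set.mem_union_left _ hX)))
    have hS1 : ∀ X, (Δ.isBox X ∨ Δ.isCirc X) → ∀ β, Δ.rule X β →
        inAB p.1 p.2 β → X ∈ p.1 := fun X hbc β hr hm => hsub1
      (Set.mem_union_left _ (Set.mem_union_right _ ⟨hbc, β, hr, mem_LA.mpr hm⟩))
    have hS2 : ∀ X, Δ.isDiamond X →
        (∀ β, Δ.rule X β → inAB p.1 p.2 β) → X ∈ p.1 := fun X hd hall => hsub1
      (Set.mem_union_right _ ⟨hd, fun β hr => mem_LA.mpr (hall β hr)⟩)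
    have hS1' : ∀ X, (Δ.isBox X ∨ Δ.isCirc X) → ∀ β, Δ.rule X β →
        (inAB p.1 p.2 β ∨ ∀ x ∈ β, x ∈ p.2) → X ∈ p.2 := fun X hbc β hr hm => hsub2
      (Set.mem_union_left _ (Set.mem_union_right _ ⟨hbc, β, hr, mem_LB.mpr hm⟩))
    have hS2' : ∀ X, Δ.isDiamond X →
        (∀ β, Δ.rule X β → (inAB p.1 p.2 β ∨ ∀ x ∈ β, x ∈ p.2)) → X ∈ p.2 :=
      fun X hd hall => hsub2
        (Set.mem_union_right _ ⟨hd, fun β hr => mem_LB.mpr (hall β hr)⟩)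
    constructor
    · intro X hX
      rw [hA'] at hX
      rcases Set.mem_iUnion.mp hX with ⟨n, hn⟩
      exact inAB_singleton (invA hGT1 hS1 hS2 hS1' hS2' n [X] hn)
    · intro X hX
      rw [hB'] at hX
      rcases Set.mem_iUnion.mp hX with ⟨n, hn⟩
      rcases invB hGT1 hGT2 hS1 hS2 hS1' hS2' n [X] hn with h | h
      · exact (inAB_singleton h).2
      · exact h X (by simp)
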